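/- A sequence ξ = ξ₁ξ₂⋯ of nonnegative integers is the β-expansion of some x ∈ [0,1) in base β if and only if σ^i ξ ≺ ε*(β) (strictly lexicographically less) for all i ≥ 0, where σ is the shift map. -/

import Mathlib

open MeasureTheory Set
open scoped Classical

/-- The beta-transformation `T_β x = βx - ⌊βx⌋`. -/
noncomputable def betaT (β x : ℝ) : ℝ := Int.fract (β * x)

/-- The `k`-th digit (0-indexed) of the β-expansion of `x`: `ε_{k+1}(x,β) = ⌊β T_β^k x⌋`. -/
noncomputable def betaDigit (β x : ℝ) (k : ℕ) : ℕ := ⌊β * (betaT β)^[k] x⌋₊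

/-- `Σ_n(β)`: admissible words of length `n`, i.e. prefixes of β-expansions of points of `[0,1)`. -/
def admWords (β : ℝ) (n : ℕ) : Set (Fin n → ℕ) :=
  {w | ∃ x ∈ Set.Ico (0:ℝ) 1, ∀ i : Fin n, w i = betaDigit β x i}

/-- The cylinder `𝔍(w)` of points of `[0,1)` whose β-expansion starts with `w`. -/
def cyl (β : ℝ) {n : ℕ} (w : Fin n → ℕ) : Set ℝ :=
  {x | x ∈ Set.Ico (0:ℝ) 1 ∧ ∀ i : Fin n, betaDigit β x i = w i}

/-- `Ξ_n(β)`: admissible words of length `n` whose cylinder is full (of length `β^{-n}`). -/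
def fullWords (β : ℝ) (n : ℕ) : Set (Fin n → ℕ) :=
  {w | w ∈ admWords β n ∧ volume (cyl β w) = ENNReal.ofReal (1 / β ^ n)}

/-- `ε(β)`: the β-expansion of 1 (0-indexed). -/
noncomputable def eps1 (β : ℝ) (k : ℕ) : ℕ := betaDigit β 1 k

/-- `ε*(β)`: the infinite β-expansion of 1.  If `ε(β)` has a last nonzero digit at
(0-indexed) position `N`, it is the periodic sequence `(ε_0 ⋯ ε_{N-1} (ε_N - 1))^∞`;
otherwise it is `ε(β)` itself. -/

noncomputable def epsStar (β : ℝ) : ℕ → ℕ :=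
  if h : ∃ N, eps1 β N ≠ 0 ∧ ∀ k, N < k → eps1 β k = 0 then
    fun k => if k % (h.choose + 1) = h.choose then eps1 β h.choose - 1
             else eps1 β (k % (h.choose + 1))
  else eps1 β

/-- Strict lexicographic order on sequences of nonnegative integers. -/
def lexLt (a b : ℕ → ℕ) : Prop := ∃ i, (∀ j, j < i → a j = b j) ∧ a i < b i

/-- Strict lexicographic order on words of length `n`. -/
def wordLt {n : ℕ} (a b : Fin n → ℕ) : Prop :=
  ∃ i : Fin n, (∀ j, j < i → a j = b j) ∧ a i < b i

/-- `Ω_n(x)`: all length-`n` prefixes of β-expansions of `x` over all bases `β > 1`. -/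
def prefWords (x : ℝ) (n : ℕ) : Set (Fin n → ℕ) :=
  {w | ∃ β : ℝ, 1 < β ∧ ∀ i : Fin n, w i = betaDigit β x i}

/-- The parameter cylinder `I(w) = {β > 1 : ε_1(x,β)⋯ε_n(x,β) = w}`. -/
def pcyl (x : ℝ) {n : ℕ} (w : Fin n → ℕ) : Set ℝ :=
  {β | 1 < β ∧ ∀ i : Fin n, betaDigit β x i = w i}

/-- `Λ_n(x)`: words whose parameter cylinder is full, i.e. `{T_β^n x : β ∈ I(w)} = [0,1)`. -/
def pfull (x : ℝ) (n : ℕ) : Set (Fin n → ℕ) :=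
  {w | w ∈ prefWords x n ∧ (fun β => (betaT β)^[n] x) '' pcyl x w = Set.Ico (0:ℝ) 1}

namespace PA


noncomputable def val (β : ℝ) (a : ℕ → ℕ) : ℝ := ∑' k, (a k : ℝ) / β ^ (k+1)
noncomputable def PS (β : ℝ) (a : ℕ → ℕ) (n : ℕ) : ℝ :=
  ∑ k ∈ Finset.range n, (a k : ℝ) / β ^ (k+1)
def Dig (β : ℝ) (a : ℕ → ℕ) : Prop := ∀ k, (a k : ℝ) ≤ β

variable {β x : ℝ} {a b : ℕ → ℕ}

lemma iter_mem (hx : x ∈ Set.Icc (0:ℝ) 1) (k : ℕ) : (betaT β)^[k] x ∈ Set.Icc (0:ℝ) 1 := by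
  cases k with
  | zero => exact hx
  | succ n =>
    rw [Function.iterate_succ_apply']
    exact ⟨Int.fract_nonneg _, (Int.fract_lt_one _).le⟩

lemma iter_mem' (hx : x ∈ Set.Ico (0:ℝ) 1) (k : ℕ) : (betaT β)^[k] x ∈ Set.Ico (0:ℝ) 1 := by
  cases k with
  | zero => exact hx
  | succ n =>
    rw [Function.iterate_succ_apply']
    exact ⟨Int.fract_nonneg _, Int.fract_lt_one _⟩

lemma digit_cast (hβ : 1 < β) (hx : x ∈ Set.Icc (0:ℝ) 1) (k : ℕ) :
    (betaDigit β x k : ℝ) = (⌊β * (betaT β)^[k] x⌋ : ℤ) := by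
  have h0 : 0 ≤ β * (betaT β)^[k] x :=
    mul_nonneg (by linarith) (iter_mem hx k).1
  exact natCast_floor_eq_intCast_floor h0

lemma step (hβ : 1 < β) (hx : x ∈ Set.Icc (0:ℝ) 1) (k : ℕ) :
    (betaT β)^[k+1] x = β * (betaT β)^[k] x - betaDigit β x k := by
  rw [Function.iterate_succ_apply', digit_cast hβ hx k]
  rw [betaT, Int.fract]

lemma digit_le (hβ : 1 < β) (hx : x ∈ Set.Icc (0:ℝ) 1) (k : ℕ) :
    (betaDigit β x k : ℝ) ≤ β * (betaT β)^[k] x :=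
  Nat.floor_le (mul_nonneg (by linarith) (iter_mem hx k).1)

lemma dig_exp (hβ : 1 < β) (hx : x ∈ Set.Icc (0:ℝ) 1) : Dig β (betaDigit β x) := by
  intro k
  have h1 := digit_le hβ hx k
  have h2 := (iter_mem (β := β) hx k).2
  have h3 := (iter_mem (β := β) hx k).1
  nlinarith

lemma psum (hβ : 1 < β) (hx : x ∈ Set.Icc (0:ℝ) 1) :
    ∀ n, x = PS β (betaDigit β x) n + (betaT β)^[n] x / β ^ n := by
  have hb0 : (0:ℝ) < β := by linarith
  intro n
  induction n with
  | zero => simp [PS]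
  | succ n ih =>
    rw [PS, Finset.sum_range_succ, ← PS, step hβ hx n]
    conv_lhs => rw [ih]
    have h1 : (β:ℝ)^(n+1) ≠ 0 := by positivity
    have h2 : (β:ℝ)^n ≠ 0 := by positivity
    field_simp
    ring

lemma summable_dig (hβ : 1 < β) (ha : Dig β a) :
    Summable (fun k => (a k : ℝ) / β ^ (k+1)) := by
  have hb0 : (0:ℝ) < β := by linarith
  have hg : Summable (fun k : ℕ => (1/β)^k) :=
    summable_geometric_of_lt_one (by positivity) (by rw [div_lt_one hb0]; linarith)
  refine hg.of_nonneg_of_le (fun k => by positivity) (fun k => ?_)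
  rw [div_le_iff₀ (by positivity)]
  calc (a k : ℝ) ≤ β := ha k
  _ ≤ (1/β)^k * β^(k+1) := le_of_eq (by
      rw [one_div, inv_pow, pow_succ, inv_mul_cancel_left₀ (pow_ne_zero k (ne_of_gt hb0))])

lemma dig_shift (ha : Dig β a) (n : ℕ) : Dig β (fun k => a (n + k)) := fun k => ha _

lemma val_nonneg (hβ : 1 < β) : 0 ≤ val β a :=
  tsum_nonneg (fun k => by positivity)

lemma val_split (hβ : 1 < β) (ha : Dig β a) (n : ℕ) :
    val β a = PS β a n + val β (fun k => a (n + k)) / β ^ n := by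
  have hs := summable_dig hβ ha
  have h1 := hs.sum_add_tsum_nat_add (f := fun k => (a k : ℝ) / β ^ (k+1)) n
  rw [val, ← h1, PS]
  congr 1
  rw [val, ← tsum_div_const]
  apply tsum_congr
  intro k
  rw [div_div, ← pow_add]
  have h2 : n + k = k + n := Nat.add_comm n k
  have h3 : k + 1 + n = k + n + 1 := by omega
  rw [h2, h3]

open Filter Topology

lemma val_exp (hβ : 1 < β) (hx : x ∈ Set.Icc (0:ℝ) 1) : val β (betaDigit β x) = x := by
  have hb0 : (0:ℝ) < β := by linarith
  have hs := summable_dig hβ (dig_exp hβ hx)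
  have h1 : Tendsto (fun n => PS β (betaDigit β x) n) atTop (𝓝 (val β (betaDigit β x))) := by
    simpa [PS, val] using hs.hasSum.tendsto_sum_nat
  have hz : Tendsto (fun n : ℕ => (betaT β)^[n] x / β ^ n) atTop (𝓝 0) := by
    apply squeeze_zero (fun n => div_nonneg (iter_mem (β := β) hx n).1 (pow_pos hb0 n).le) (g := fun n : ℕ => (1/β)^n)
    · intro n
      rw [div_pow, one_pow, div_le_div_iff₀ (by positivity) (by positivity), one_mul]
      nlinarith [(iter_mem (β := β) hx n).2, pow_pos hb0 n]
    · exact tendsto_pow_atTop_nhds_zero_of_lt_one (by positivity)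
        (by rw [div_lt_one hb0]; linarith)
  have h2 : Tendsto (fun n => PS β (betaDigit β x) n) atTop (𝓝 (x - 0)) := by
    have heq : (fun n => PS β (betaDigit β x) n)
        = fun n => x - (betaT β)^[n] x / β ^ n := by
      funext n
      have := psum hβ hx n
      linarith
    rw [heq]
    exact tendsto_const_nhds.sub hz
  have := tendsto_nhds_unique h1 h2
  rw [this, sub_zero]

lemma digit_shift (hβ : 1 < β) (m k : ℕ) :
    betaDigit β x (m + k) = betaDigit β ((betaT β)^[m] x) k := by
  unfold betaDigit
  rw [← Function.iterate_add_apply]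
  congr 3
  omega

lemma one_mem : (1:ℝ) ∈ Set.Icc (0:ℝ) 1 := ⟨zero_le_one, le_refl 1⟩

lemma dig_eps1 (hβ : 1 < β) : Dig β (eps1 β) := dig_exp hβ one_mem

lemma val_eps1 (hβ : 1 < β) : val β (eps1 β) = 1 := val_exp hβ one_mem

lemma eps1_shift (hβ : 1 < β) (m : ℕ) :
    (fun k => eps1 β (m + k)) = betaDigit β ((betaT β)^[m] 1) := by
  funext k
  exact digit_shift hβ m k

lemma val_eps1_shift (hβ : 1 < β) (m : ℕ) :
    val β (fun k => eps1 β (m + k)) = (betaT β)^[m] 1 := by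
  rw [eps1_shift hβ m]
  exact val_exp hβ (iter_mem one_mem m)

lemma iter_zero (k : ℕ) : (betaT β)^[k] 0 = 0 := by
  induction k with
  | zero => rfl
  | succ n ih =>
    rw [Function.iterate_succ_apply', ih]
    simp [betaT]

lemma eps_after_zero (hβ : 1 < β) {n : ℕ} (h : (betaT β)^[n] 1 = 0) {k : ℕ} (hk : n ≤ k) :
    eps1 β k = 0 := by
  have : k = n + (k - n) := by omega
  rw [eps1, this, digit_shift hβ, h]
  unfold betaDigit
  rw [iter_zero]
  simp

lemma eps1_zero_ne (hβ : 1 < β) : eps1 β 0 ≠ 0 := by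
  have : (1:ℕ) ≤ ⌊β * (betaT β)^[0] 1⌋₊ := by
    apply Nat.le_floor
    simpa using hβ.le
  unfold eps1 betaDigit
  omega

lemma iter_one_pos (hβ : 1 < β)
    (hc : ¬∃ N, eps1 β N ≠ 0 ∧ ∀ k, N < k → eps1 β k = 0) (n : ℕ) :
    0 < (betaT β)^[n] 1 := by
  rcases lt_or_eq_of_le (iter_mem (β := β) one_mem n).1 with h | h
  · exact h
  exfalso
  apply hc
  refine ⟨Nat.findGreatest (fun k => eps1 β k ≠ 0) n, ?_, ?_⟩
  · exact Nat.findGreatest_spec (P := fun k => eps1 β k ≠ 0) (Nat.zero_le n) (eps1_zero_ne hβ)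
  · intro k hk
    by_contra hne
    rcases le_or_gt k n with h2 | h2
    · exact absurd (Nat.le_findGreatest (P := fun k => eps1 β k ≠ 0) h2 hne) (by omega)
    · exact hne (eps_after_zero hβ h.symm (by omega))


section Case2

lemma epsStar_eq_case2 (h : ∃ N, eps1 β N ≠ 0 ∧ ∀ k, N < k → eps1 β k = 0) :
    epsStar β = fun k => if k % (h.choose + 1) = h.choose then eps1 β h.choose - 1
             else eps1 β (k % (h.choose + 1)) := by
  rw [epsStar, dif_pos h]

lemma epsStar_mod (h : ∃ N, eps1 β N ≠ 0 ∧ ∀ k, N < k → eps1 β k = 0) (j : ℕ) :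
    epsStar β j = epsStar β (j % (h.choose + 1)) := by
  rw [epsStar_eq_case2 h]
  simp only [Nat.mod_mod_of_dvd _ dvd_rfl]

lemma epsStar_lt (h : ∃ N, eps1 β N ≠ 0 ∧ ∀ k, N < k → eps1 β k = 0) (k : ℕ)
    (hk : k < h.choose) : epsStar β k = eps1 β k := by
  rw [epsStar_eq_case2 h]
  have h1 : k % (h.choose + 1) = k := Nat.mod_eq_of_lt (by omega)
  simp only [h1, if_neg (by omega : ¬ k = h.choose)]

lemma epsStar_at (h : ∃ N, eps1 β N ≠ 0 ∧ ∀ k, N < k → eps1 β k = 0) :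
    epsStar β h.choose = eps1 β h.choose - 1 := by
  rw [epsStar_eq_case2 h]
  have h1 : h.choose % (h.choose + 1) = h.choose := Nat.mod_eq_of_lt (by omega)
  simp [h1]

lemma T_p_zero (hβ : 1 < β) (h : ∃ N, eps1 β N ≠ 0 ∧ ∀ k, N < k → eps1 β k = 0) :
    (betaT β)^[h.choose + 1] 1 = 0 := by
  obtain ⟨hN1, hN2⟩ := h.choose_spec
  have hy := val_exp hβ (iter_mem (β := β) one_mem (h.choose + 1))
  rw [← hy]
  unfold val
  convert tsum_zero with k
  have hd : betaDigit β ((betaT β)^[h.choose + 1] 1) k = 0 := by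
    rw [← digit_shift hβ]
    exact hN2 _ (by omega)
  rw [hd]
  simp

lemma beta_TN (hβ : 1 < β) (h : ∃ N, eps1 β N ≠ 0 ∧ ∀ k, N < k → eps1 β k = 0) :
    β * (betaT β)^[h.choose] 1 = eps1 β h.choose := by
  have h1 := step hβ (x := 1) one_mem h.choose
  rw [T_p_zero hβ h] at h1
  have h2 : betaDigit β 1 h.choose = eps1 β h.choose := rfl
  rw [h2] at h1
  linarith

lemma iter_one_pos_case2 (hβ : 1 < β) (h : ∃ N, eps1 β N ≠ 0 ∧ ∀ k, N < k → eps1 β k = 0)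
    {r : ℕ} (hr : r ≤ h.choose) : 0 < (betaT β)^[r] 1 := by
  obtain ⟨hN1, hN2⟩ := h.choose_spec
  rcases lt_or_eq_of_le (iter_mem (β := β) one_mem r).1 with h2 | h2
  · exact h2
  · exact absurd (eps_after_zero hβ h2.symm hr) hN1

lemma PS_shift_case2 (hβ : 1 < β) (h : ∃ N, eps1 β N ≠ 0 ∧ ∀ k, N < k → eps1 β k = 0)
    {m : ℕ} (hm : m ≤ h.choose) :
    PS β (fun k => epsStar β (m + k)) (h.choose + 1 - m)
      = (betaT β)^[m] 1 - 1 / β ^ (h.choose + 1 - m) := by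
  obtain ⟨hN1, hN2⟩ := h.choose_spec
  have hb0 : (0:ℝ) < β := by linarith
  set N := h.choose with hN
  have hq : N + 1 - m = (N - m) + 1 := by omega
  rw [hq, PS, Finset.sum_range_succ]
  have hsum : ∑ k ∈ Finset.range (N - m), ((fun k => epsStar β (m + k)) k : ℝ) / β ^ (k+1)
      = (betaT β)^[m] 1 - (eps1 β N : ℝ) / β ^ (N - m + 1) := by
    have he : ∀ k < N - m, (epsStar β (m + k) : ℝ) = (betaDigit β ((betaT β)^[m] 1) k : ℝ) := by
      intro k hk
      rw [epsStar_lt h _ (by omega), ← digit_shift hβ]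
      rfl
    rw [Finset.sum_congr rfl (fun k hk => by
      rw [he k (Finset.mem_range.mp hk)])]
    have hp := psum hβ (iter_mem (β := β) one_mem m) (N - m)
    rw [← PS]
    have hit : (betaT β)^[N - m] ((betaT β)^[m] 1) = (betaT β)^[N] 1 := by
      rw [← Function.iterate_add_apply]
      congr 1
      omega
    rw [hit] at hp
    have hTN : (betaT β)^[N] 1 = (eps1 β N : ℝ) / β := by
      have := beta_TN hβ h
      field_simp
      linarith
    rw [hTN] at hp
    rw [div_div, ← pow_succ'] at hp
    linarith [hp]
  rw [hsum]
  have hlast : ((fun k => epsStar β (m + k)) (N - m) : ℝ) = (eps1 β N : ℝ) - 1 := by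
    simp only
    have h3 : m + (N - m) = N := by omega
    rw [h3, epsStar_at h, Nat.cast_sub (Nat.one_le_iff_ne_zero.mpr hN1)]
    simp
  rw [hlast]
  ring

lemma dig_epsStar_case2 (hβ : 1 < β) (h : ∃ N, eps1 β N ≠ 0 ∧ ∀ k, N < k → eps1 β k = 0) :
    Dig β (epsStar β) := by
  intro k
  rw [epsStar_eq_case2 h]
  simp only
  split
  · have h1 : (eps1 β h.choose - 1 : ℕ) ≤ eps1 β h.choose := Nat.sub_le _ _
    have h2 : (eps1 β h.choose : ℝ) ≤ β := dig_eps1 hβ h.choose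
    have h3 : ((eps1 β h.choose - 1 : ℕ) : ℝ) ≤ (eps1 β h.choose : ℝ) := Nat.cast_le.mpr h1
    linarith
  · exact dig_eps1 hβ _

lemma shift_p_case2 (h : ∃ N, eps1 β N ≠ 0 ∧ ∀ k, N < k → eps1 β k = 0) :
    (fun k => epsStar β (h.choose + 1 + k)) = epsStar β := by
  funext k
  rw [epsStar_mod h, Nat.add_comm (h.choose + 1) k, Nat.add_mod_right, ← epsStar_mod h]

lemma val_epsStar_case2 (hβ : 1 < β) (h : ∃ N, eps1 β N ≠ 0 ∧ ∀ k, N < k → eps1 β k = 0) :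
    val β (epsStar β) = 1 := by
  have hb0 : (0:ℝ) < β := by linarith
  set p := h.choose + 1 with hp
  have hzero : epsStar β = fun k => epsStar β (0 + k) := by
    funext k; rw [Nat.zero_add]
  have hsplit := val_split hβ (dig_epsStar_case2 hβ h) p
  have hPS : PS β (epsStar β) p = 1 - 1 / β ^ p := by
    have h4 := PS_shift_case2 hβ h (Nat.zero_le h.choose)
    simp only [Nat.sub_zero] at h4
    rw [hzero, h4]
    simp [hp]
  rw [hPS, shift_p_case2 h] at hsplit
  have hbp : (1:ℝ) < β ^ p := one_lt_pow₀ hβ (by omega)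
  have hlt : 1 / β ^ p < 1 := by
    rw [div_lt_one (by positivity)]
    exact hbp
  have hne : 1 - 1 / β ^ p ≠ 0 := by linarith
  have h5 : val β (epsStar β) * (1 - 1 / β ^ p) = 1 * (1 - 1 / β ^ p) := by
    ring_nf
    ring_nf at hsplit
    linarith
  exact mul_right_cancel₀ hne h5

lemma val_shift_epsStar_case2 (hβ : 1 < β)
    (h : ∃ N, eps1 β N ≠ 0 ∧ ∀ k, N < k → eps1 β k = 0) {m : ℕ} (hm : m ≤ h.choose) :
    val β (fun k => epsStar β (m + k)) = (betaT β)^[m] 1 := by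
  have hb0 : (0:ℝ) < β := by linarith
  set p := h.choose + 1 with hp
  have hsplit := val_split hβ (dig_shift (dig_epsStar_case2 hβ h) m) (p - m)
  have htail : (fun k => epsStar β (m + (p - m + k))) = epsStar β := by
    funext k
    have h3 : m + (p - m + k) = p + k := by omega
    rw [h3]
    exact congrFun (shift_p_case2 h) k
  rw [htail, PS_shift_case2 hβ h hm, val_epsStar_case2 hβ h] at hsplit
  rw [hsplit]
  ring

end Case2

lemma epsStar_case1 (h : ¬ ∃ N, eps1 β N ≠ 0 ∧ ∀ k, N < k → eps1 β k = 0) :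
    epsStar β = eps1 β := by
  rw [epsStar, dif_neg h]

lemma mod_le_choose (h : ∃ N, eps1 β N ≠ 0 ∧ ∀ k, N < k → eps1 β k = 0) (m : ℕ) :
    m % (h.choose + 1) ≤ h.choose :=
  Nat.lt_succ_iff.mp (Nat.mod_lt m (Nat.succ_pos _))

lemma shift_mod (h : ∃ N, eps1 β N ≠ 0 ∧ ∀ k, N < k → eps1 β k = 0) (m : ℕ) :
    (fun k => epsStar β (m + k)) = (fun k => epsStar β (m % (h.choose + 1) + k)) := by
  funext k
  rw [epsStar_mod h (m + k), epsStar_mod h (m % (h.choose + 1) + k)]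
  congr 1
  rw [Nat.add_mod m k, Nat.add_mod (m % (h.choose + 1)) k, Nat.mod_mod_of_dvd _ dvd_rfl]

lemma dig_epsStar (hβ : 1 < β) : Dig β (epsStar β) := by
  by_cases h : ∃ N, eps1 β N ≠ 0 ∧ ∀ k, N < k → eps1 β k = 0
  · exact dig_epsStar_case2 hβ h
  · rw [epsStar_case1 h]
    exact dig_eps1 hβ

lemma val_epsStar (hβ : 1 < β) : val β (epsStar β) = 1 := by
  by_cases h : ∃ N, eps1 β N ≠ 0 ∧ ∀ k, N < k → eps1 β k = 0
  · exact val_epsStar_case2 hβ h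
  · rw [epsStar_case1 h]
    exact val_eps1 hβ

lemma val_shift_epsStar_le (hβ : 1 < β) (m : ℕ) :
    val β (fun k => epsStar β (m + k)) ≤ 1 := by
  by_cases h : ∃ N, eps1 β N ≠ 0 ∧ ∀ k, N < k → eps1 β k = 0
  · rw [shift_mod h m, val_shift_epsStar_case2 hβ h (mod_le_choose h m)]
    exact (iter_mem (β := β) one_mem _).2
  · rw [epsStar_case1 h, val_eps1_shift hβ m]
    exact (iter_mem (β := β) one_mem m).2

lemma PS_epsStar_lt_one (hβ : 1 < β) (n : ℕ) : PS β (epsStar β) n < 1 := by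
  have hb0 : (0:ℝ) < β := by linarith
  have hsplit := val_split hβ (dig_epsStar hβ) n
  rw [val_epsStar hβ] at hsplit
  have hpos : 0 < val β (fun k => epsStar β (n + k)) := by
    by_cases h : ∃ N, eps1 β N ≠ 0 ∧ ∀ k, N < k → eps1 β k = 0
    · rw [shift_mod h n, val_shift_epsStar_case2 hβ h (mod_le_choose h n)]
      exact iter_one_pos_case2 hβ h (mod_le_choose h n)
    · rw [epsStar_case1 h, val_eps1_shift hβ n]
      exact iter_one_pos hβ h n
  have hd : 0 < val β (fun k => epsStar β (n + k)) / β ^ n := div_pos hpos (by positivity)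
  linarith

lemma lex_trichotomy (a b : ℕ → ℕ) : a = b ∨ lexLt a b ∨ lexLt b a := by
  by_cases h : a = b
  · exact Or.inl h
  right
  have hex : ∃ i, a i ≠ b i := by
    by_contra hc
    push_neg at hc
    exact h (funext hc)
  have hi := Nat.find_spec hex
  have hlt : ∀ j, j < Nat.find hex → a j = b j := fun j hj => by
    have := Nat.find_min hex hj
    omega
  rcases lt_or_gt_of_ne hi with h1 | h1
  · exact Or.inl ⟨Nat.find hex, hlt, h1⟩
  · exact Or.inr ⟨Nat.find hex, fun j hj => (hlt j hj).symm, h1⟩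

lemma PS_succ_le (hβ : 1 < β) {a b : ℕ → ℕ} {i : ℕ}
    (hagree : ∀ j, j < i → a j = b j) (hlt : a i < b i) :
    PS β a (i+1) + 1 / β ^ (i+1) ≤ PS β b (i+1) := by
  have hb0 : (0:ℝ) < β := by linarith
  rw [PS, PS, Finset.sum_range_succ, Finset.sum_range_succ]
  have h1 : ∑ k ∈ Finset.range i, (a k : ℝ) / β ^ (k+1)
      = ∑ k ∈ Finset.range i, (b k : ℝ) / β ^ (k+1) :=
    Finset.sum_congr rfl fun k hk => by rw [hagree k (Finset.mem_range.mp hk)]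
  rw [h1]
  have h2 : (a i : ℝ) + 1 ≤ (b i : ℝ) := by exact_mod_cast hlt
  have h3 : ((a i : ℝ) + 1) / β ^ (i+1) ≤ (b i : ℝ) / β ^ (i+1) := by gcongr
  rw [add_div] at h3
  linarith

lemma val_le_of_lexLt (hβ : 1 < β) {a b : ℕ → ℕ} (ha : Dig β a) (hb : Dig β b)
    (hl : lexLt a b) (htail : ∀ m, val β (fun k => a (m + k)) ≤ 1) :
    val β a ≤ val β b := by
  have hb0 : (0:ℝ) < β := by linarith
  obtain ⟨i, hagree, hlt⟩ := hl
  have h1 := val_split hβ ha (i+1)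
  have h2 := val_split hβ hb (i+1)
  have h3 := PS_succ_le hβ hagree hlt
  have h4 : val β (fun k => a (i+1+k)) / β ^ (i+1) ≤ 1 / β ^ (i+1) := by
    gcongr
    exact htail (i+1)
  have h5 : 0 ≤ val β (fun k => b (i+1+k)) / β ^ (i+1) :=
    div_nonneg (val_nonneg hβ) (by positivity)
  linarith

lemma forward (hβ : 1 < β) {x : ℝ} (hx : x ∈ Set.Ico (0:ℝ) 1) (i : ℕ) :
    lexLt (fun j => betaDigit β x (i + j)) (epsStar β) := by
  have hyI : (betaT β)^[i] x ∈ Set.Ico (0:ℝ) 1 := iter_mem' hx i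
  set y := (betaT β)^[i] x with hy
  have hyI' : y ∈ Set.Icc (0:ℝ) 1 := ⟨hyI.1, hyI.2.le⟩
  have hsh : (fun j => betaDigit β x (i + j)) = betaDigit β y := by
    funext j
    exact digit_shift hβ i j
  rw [hsh]
  rcases lex_trichotomy (betaDigit β y) (epsStar β) with he | hl | hg
  · exfalso
    have hv := val_exp hβ hyI'
    rw [he, val_epsStar hβ] at hv
    linarith [hyI.2]
  · exact hl
  · exfalso
    have hle := val_le_of_lexLt hβ (dig_epsStar hβ) (dig_exp hβ hyI') hg
      (val_shift_epsStar_le hβ)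
    rw [val_epsStar hβ, val_exp hβ hyI'] at hle
    linarith [hyI.2]

lemma backward (hβ : 1 < β) (ξ : ℕ → ℕ)
    (H : ∀ i : ℕ, lexLt (fun j => ξ (i + j)) (epsStar β)) :
    ∃ x ∈ Set.Ico (0:ℝ) 1, ∀ k, ξ k = betaDigit β x k := by
  have hb0 : (0:ℝ) < β := by linarith
  have hdig : Dig β ξ := by
    intro k
    have h0 : ξ k ≤ epsStar β 0 := by
      obtain ⟨i, hagree, hlt⟩ := H k
      rcases Nat.eq_zero_or_pos i with h | h
      · subst h
        simpa using hlt.le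
      · have := hagree 0 h
        simp only [Nat.add_zero] at this
        simp [this]
    calc (ξ k : ℝ) ≤ (epsStar β 0 : ℝ) := Nat.cast_le.mpr h0
    _ ≤ β := dig_epsStar hβ 0
  have hdigs : ∀ j, Dig β (fun k => ξ (j + k)) := fun j k => hdig _
  set g : ℕ → ℝ := fun j => val β (fun k => ξ (j + k)) with hg
  have hstep : ∀ j, ∃ i : ℕ,
      g j ≤ PS β (epsStar β) (i+1) + (g (j+i+1) - 1) / β ^ (i+1) := by
    intro j
    obtain ⟨i, hagree, hlt⟩ := H j
    refine ⟨i, ?_⟩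
    have h1 := val_split hβ (hdigs j) (i+1)
    have htail : (fun k => ξ (j + (i+1+k))) = (fun k => ξ (j+i+1 + k)) := by
      funext k
      congr 1
      omega
    rw [htail] at h1
    have h3 := PS_succ_le hβ (a := fun k => ξ (j+k)) (b := epsStar β) hagree hlt
    have h4 : 0 < (β:ℝ) ^ (i+1) := by positivity
    rw [sub_div]
    have h5 : (1:ℝ) / β ^ (i+1) = 1 / β ^ (i+1) := rfl
    simp only [hg] at h1 ⊢
    rw [h1]
    linarith
  have hgeo : Summable (fun k : ℕ => (1/β)^k) :=
    summable_geometric_of_lt_one (by positivity) (by rw [div_lt_one hb0]; linarith)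
  have hCsum : Summable (fun k : ℕ => β / β^(k+1)) := by
    have heq : (fun k : ℕ => β / β^(k+1)) = fun k : ℕ => (1/β)^k := by
      funext k
      rw [div_pow, one_pow, pow_succ]
      rw [div_eq_div_iff (by positivity) (by positivity)]
      ring
    rw [heq]
    exact hgeo
  set C : ℝ := ∑' k : ℕ, β / β^(k+1) with hC
  have hBdd : ∀ j, g j ≤ C := by
    intro j
    apply Summable.tsum_le_tsum _ (summable_dig hβ (hdigs j)) hCsum
    intro k
    gcongr
    exact hdigs j k
  have hne : (Set.range g).Nonempty := ⟨g 0, Set.mem_range_self 0⟩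
  have hbdd : BddAbove (Set.range g) := ⟨C, by rintro _ ⟨j, rfl⟩; exact hBdd j⟩
  set M := sSup (Set.range g) with hM
  have hM_le : ∀ j, g j ≤ M := fun j => le_csSup hbdd (Set.mem_range_self j)
  have hM1 : M ≤ 1 := by
    by_contra hMc
    push_neg at hMc
    have key : ∀ j, g j ≤ 1 + (M - 1)/β := by
      intro j
      obtain ⟨i, hst⟩ := hstep j
      have hPSlt := PS_epsStar_lt_one hβ (i+1)
      have h2 : g (j+i+1) ≤ M := hM_le _
      have h4 : (g (j+i+1) - 1)/β^(i+1) ≤ (M-1)/β := by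
        calc (g (j+i+1) - 1)/β^(i+1) ≤ (M-1)/β^(i+1) := by
              gcongr <;> linarith
        _ ≤ (M-1)/β := by
              gcongr
              · calc β = β^1 := (pow_one β).symm
                _ ≤ β^(i+1) := pow_le_pow_right₀ hβ.le (by omega)
      linarith
    have hsup : M ≤ 1 + (M - 1)/β := csSup_le hne (by rintro _ ⟨j, rfl⟩; exact key j)
    have : (M - 1) / β < M - 1 := by
      rw [div_lt_iff₀ hb0]
      nlinarith
    linarith
  have hlt1 : ∀ j, g j < 1 := by
    intro j
    obtain ⟨i, hst⟩ := hstep j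
    have h2 : g (j+i+1) ≤ 1 := le_trans (hM_le _) hM1
    have h3 : (g (j+i+1) - 1)/β^(i+1) ≤ 0 :=
      div_nonpos_of_nonpos_of_nonneg (by linarith) (by positivity)
    linarith [PS_epsStar_lt_one hβ (i+1)]
  have hge0 : ∀ j, 0 ≤ g j := fun j => val_nonneg hβ
  have hmul : ∀ n, β * g n = (ξ n : ℝ) + g (n+1) := by
    intro n
    have h1 := val_split hβ (hdigs n) 1
    have htail : (fun k => ξ (n + (1+k))) = (fun k => ξ (n+1+k)) := by
      funext k
      congr 1
      omega
    rw [htail] at h1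
    have hPS1 : PS β (fun k => ξ (n+k)) 1 = (ξ n : ℝ)/β := by
      rw [PS, Finset.sum_range_one]
      norm_num
    rw [hPS1, pow_one] at h1
    simp only [hg]
    rw [h1]
    field_simp
  have hiter : ∀ n, (betaT β)^[n] (g 0) = g n := by
    intro n
    induction n with
    | zero => rfl
    | succ n ih =>
      rw [Function.iterate_succ_apply', ih, betaT, hmul n]
      rw [show ((ξ n : ℝ)) = ((ξ n : ℤ) : ℝ) by push_cast; rfl, Int.fract_intCast_add]
      exact Int.fract_eq_self.mpr ⟨hge0 _, hlt1 _⟩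
  refine ⟨g 0, ⟨hge0 0, hlt1 0⟩, ?_⟩
  intro k
  unfold betaDigit
  rw [hiter k, hmul k]
  symm
  rw [Nat.floor_eq_iff (add_nonneg (Nat.cast_nonneg _) (hge0 (k+1)))]
  constructor
  · linarith [hge0 (k+1)]
  · linarith [hlt1 (k+1)]

end PA

theorem expansion_iff_lexLt_epsStar (β : ℝ) (hβ : 1 < β) (ξ : ℕ → ℕ) :
    (∃ x ∈ Set.Ico (0:ℝ) 1, ∀ k, ξ k = betaDigit β x k) ↔
      ∀ i : ℕ, lexLt (fun j => ξ (i + j)) (epsStar β) := by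
  constructor
  · rintro ⟨x, hx, hxk⟩ i
    have h1 : (fun j => ξ (i + j)) = fun j => betaDigit β x (i + j) :=
      funext fun j => hxk _
    rw [h1]
    exact PA.forward hβ hx i
  · exact PA.backward hβ ξ
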